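/- Partial switch structure of the optimal multicast policy in the nonuniform case (Theorem 2 of the paper): let V : 𝒬 → ℝ be ⊵-monotone. If content u minimizes the state-action cost at state Q, i.e., J_V(Q, u) ≤ J_V(Q, v) for all v ∈ Fin M, and k ∈ Fin K is such that Q u k < N u k and Q + E_{u,k} ⊵ Q (equivalently, there exists j ≥ k with Q u j > 0), then u also minimizes the state-action cost at Q + E_{u,k}, i.e., J_V(Q + E_{u,k}, u) ≤ J_V(Q + E_{u,k}, v) for all v ∈ Fin M. -/

import Mathlib

open Finset

/-- State space of the nonuniform-channel multicast MDP: request queue matrices capped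
by `N`. -/
def QS (M K : ℕ) (N : Fin M → Fin K → ℕ) : Type :=
  {Q : Fin M → Fin K → ℕ // ∀ m k, Q m k ≤ N m k}

/-- Next state when content `u` is multicast in state `Q` and arrival `a` occurs. -/
def nextQ {M K : ℕ} {N : Fin M → Fin K → ℕ} (Q : QS M K N) (u : Fin M)
    (a : Fin M → Fin K → ℕ) : QS M K N :=
  ⟨fun m k => min ((if m = u then 0 else Q.1 m k) + a m k) (N m k),
    fun _ _ => min_le_right _ _⟩

/-- Power cost of multicasting with per-user power levels `pu` to the users with pending
requests in `q`: the maximum of `pu` over `{k : q k > 0}`, and `0` if this set is empty. -/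
noncomputable def PCost {K : ℕ} (pu : Fin K → ℝ) (q : Fin K → ℕ) : ℝ :=
  if h : (Finset.univ.filter fun k => 0 < q k).Nonempty then
    (Finset.univ.filter fun k => 0 < q k).sup' h pu
  else 0

/-- Per-stage cost in the nonuniform case. -/
noncomputable def gCost {M K : ℕ} {N : Fin M → Fin K → ℕ} (wp wf : ℝ)
    (p : Fin M → Fin K → ℝ) (f : Fin M → ℝ) (Q : QS M K N) (u : Fin M) : ℝ :=
  (∑ m, ∑ k, (Q.1 m k : ℝ)) + wp * PCost (p u) (Q.1 u) + wf * f u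

/-- State-action cost function `J_V(Q,u)` in the nonuniform case. -/
noncomputable def JCost {M K : ℕ} {N : Fin M → Fin K → ℕ}
    (𝒜 : Finset (Fin M → Fin K → ℕ)) (ρ : (Fin M → Fin K → ℕ) → ℝ)
    (wp wf : ℝ) (p : Fin M → Fin K → ℝ) (f : Fin M → ℝ)
    (V : QS M K N → ℝ) (Q : QS M K N) (u : Fin M) : ℝ :=
  gCost wp wf p f Q u + ∑ a ∈ 𝒜, ρ a * V (nextQ Q u a)

/-- The partial order `q² ⊵ q¹` on per-content request queue vectors. -/
def TriVec {K : ℕ} (q₂ q₁ : Fin K → ℕ) : Prop :=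
  ∀ k : Fin K,
    ((∃ j, k ≤ j ∧ 0 < q₁ j) → q₁ k ≤ q₂ k) ∧
    ((¬ ∃ j, k ≤ j ∧ 0 < q₁ j) → q₂ k = q₁ k)

/-- The partial order `Q² ⊵ Q¹` on states: `Q² m ⊵ Q¹ m` for every content `m`. -/
def TriState {M K : ℕ} {N : Fin M → Fin K → ℕ} (Q₂ Q₁ : QS M K N) : Prop :=
  ∀ m, TriVec (Q₂.1 m) (Q₁.1 m)

/-- The state `Q + E_{u,k}`: entry `(u,k)` is increased by 1 (requires `Q u k < N u k`). -/
def addE {M K : ℕ} {N : Fin M → Fin K → ℕ} (Q : QS M K N) (u : Fin M) (k : Fin K)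
    (h : Q.1 u k < N u k) : QS M K N :=
  ⟨Function.update Q.1 u (Function.update (Q.1 u) k (Q.1 u k + 1)), by
    intro m i
    rcases eq_or_ne m u with rfl | hm
    · simp only [Function.update_self]
      rcases eq_or_ne i k with rfl | hi
      · simp only [Function.update_self]; exact h
      · simp only [Function.update_of_ne hi]; exact Q.2 m i
    · simp only [Function.update_of_ne hm]; exact Q.2 m i⟩


lemma addE_apply {M K : ℕ} {N : Fin M → Fin K → ℕ} (Q : QS M K N) (u : Fin M) (k : Fin K)
    (h : Q.1 u k < N u k) (m : Fin M) (i : Fin K) :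
    (addE Q u k h).1 m i = if m = u ∧ i = k then Q.1 m i + 1 else Q.1 m i := by
  rcases eq_or_ne m u with rfl | hm
  · rcases eq_or_ne i k with rfl | hi
    · simp [addE]
    · simp [addE, Function.update_of_ne hi, hi]
  · simp [addE, Function.update_of_ne hm, hm]

lemma sum_addE {M K : ℕ} {N : Fin M → Fin K → ℕ} (Q : QS M K N) (u : Fin M) (k : Fin K)
    (h : Q.1 u k < N u k) :
    (∑ m, ∑ i, ((addE Q u k h).1 m i : ℝ)) = (∑ m, ∑ i, (Q.1 m i : ℝ)) + 1 := by
  have key : ∀ m i, ((addE Q u k h).1 m i : ℝ)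
      = (Q.1 m i : ℝ) + (if m = u then (1:ℝ) else 0) * (if i = k then (1:ℝ) else 0) := by
    intro m i
    rw [addE_apply]
    by_cases hm : m = u <;> by_cases hi : i = k <;> simp [hm, hi]
  rw [Finset.sum_congr rfl fun m _ => Finset.sum_congr rfl fun i _ => key m i]
  simp only [Finset.sum_add_distrib, ← Finset.mul_sum,
    Finset.sum_ite_eq' Finset.univ k fun _ => (1:ℝ),
    Finset.sum_ite_eq' Finset.univ u fun _ => (1:ℝ)]
  simp

lemma PCost_update {K : ℕ} (pu : Fin K → ℝ) (hmono : Monotone pu) (q : Fin K → ℕ)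
    (k j : Fin K) (hkj : k ≤ j) (hj : 0 < q j) :
    PCost pu (Function.update q k (q k + 1)) = PCost pu q := by
  classical
  set S := Finset.univ.filter fun i => 0 < q i with hS
  have hjS : j ∈ S := by simp [hS, hj]
  have hSne : S.Nonempty := ⟨j, hjS⟩
  have hset : (Finset.univ.filter fun i => 0 < Function.update q k (q k + 1) i)
      = insert k S := by
    ext i
    rcases eq_or_ne i k with rfl | hi
    · simp [Function.update_self]
    · simp [Function.update_of_ne hi, hS, hi]
  have hne2 : (Finset.univ.filter fun i => 0 < Function.update q k (q k + 1) i).Nonempty := by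
    rw [hset]; exact ⟨k, Finset.mem_insert_self _ _⟩
  rw [PCost, PCost, dif_pos hSne, dif_pos hne2]
  rw [Finset.sup'_congr hne2 hset (fun a _ => rfl)]
  rw [Finset.sup'_insert hSne]
  exact sup_eq_right.mpr (le_trans (hmono hkj) (Finset.le_sup' pu hjS))

lemma nextQ_addE_self {M K : ℕ} {N : Fin M → Fin K → ℕ} (Q : QS M K N) (u : Fin M)
    (k : Fin K) (h : Q.1 u k < N u k) (a : Fin M → Fin K → ℕ) :
    nextQ (addE Q u k h) u a = nextQ Q u a := by
  apply Subtype.ext; funext m i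
  show min ((if m = u then 0 else (addE Q u k h).1 m i) + a m i) (N m i) = _
  rcases eq_or_ne m u with rfl | hm
  · simp [nextQ]
  · rw [addE_apply]; simp [nextQ, hm]
/-- Partial switch structure of the optimal policy in the nonuniform case (Theorem 2):
for a `⊵`-monotone value function `V`, if content `u` minimizes the state-action cost at
`Q`, and `Q u k < N u k` with `Q + E_{u,k} ⊵ Q`, then `u` also minimizes the state-action
cost at `Q + E_{u,k}`. -/
theorem optimal_policy_partial_switch_structure
    {M K : ℕ} (hM : 1 ≤ M) (hK : 1 ≤ K) (N : Fin M → Fin K → ℕ)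
    (𝒜 : Finset (Fin M → Fin K → ℕ)) (ρ : (Fin M → Fin K → ℕ) → ℝ)
    (hρ0 : ∀ a ∈ 𝒜, 0 ≤ ρ a) (hρ1 : ∑ a ∈ 𝒜, ρ a = 1)
    (wp wf : ℝ) (p : Fin M → Fin K → ℝ) (f : Fin M → ℝ)
    (hp0 : ∀ m k, 0 ≤ p m k) (hpmono : ∀ m, Monotone (p m))
    (V : QS M K N → ℝ)
    (hV : ∀ Q₁ Q₂ : QS M K N, TriState Q₂ Q₁ → V Q₁ ≤ V Q₂) :
    ∀ (Q : QS M K N) (u : Fin M) (k : Fin K) (h : Q.1 u k < N u k),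
      TriState (addE Q u k h) Q →
      (∀ v : Fin M, JCost 𝒜 ρ wp wf p f V Q u ≤ JCost 𝒜 ρ wp wf p f V Q v) →
      ∀ v : Fin M, JCost 𝒜 ρ wp wf p f V (addE Q u k h) u ≤
        JCost 𝒜 ρ wp wf p f V (addE Q u k h) v := by
  intro Q u k h htri hmin v
  -- extract the witness j ≥ k with Q u j > 0
  have hjw : ∃ j, k ≤ j ∧ 0 < Q.1 u j := by
    by_contra hcon
    have h2 := (htri u k).2 hcon
    rw [addE_apply] at h2
    simp at h2
  obtain ⟨j, hkj, hj⟩ := hjw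
  -- per-stage cost increases by exactly 1
  have hg : ∀ w, gCost wp wf p f (addE Q u k h) w = gCost wp wf p f Q w + 1 := by
    intro w
    have hP : PCost (p w) ((addE Q u k h).1 w) = PCost (p w) (Q.1 w) := by
      rcases eq_or_ne w u with rfl | hw
      · have hrow : (addE Q w k h).1 w = Function.update (Q.1 w) k (Q.1 w k + 1) := by
          funext i
          rw [addE_apply]
          rcases eq_or_ne i k with rfl | hi
          · simp
          · simp [hi, Function.update_of_ne hi]
        rw [hrow]
        exact PCost_update (p w) (hpmono w) _ k j hkj hj
      · have hrow : (addE Q u k h).1 w = Q.1 w := by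
          funext i; rw [addE_apply]; simp [hw]
        rw [hrow]
    unfold gCost
    rw [sum_addE Q u k h, hP]
    ring
  -- value comparison
  have hVle : ∀ (w : Fin M) (a : Fin M → Fin K → ℕ),
      V (nextQ Q w a) ≤ V (nextQ (addE Q u k h) w a) := by
    intro w a
    rcases eq_or_ne w u with rfl | hw
    · rw [nextQ_addE_self]
    · apply hV
      intro m i
      have hentry : ∀ m' i', (nextQ (addE Q u k h) w a).1 m' i'
          = if m' = u ∧ i' = k then min (Q.1 m' i' + 1 + a m' i') (N m' i')
            else (nextQ Q w a).1 m' i' := by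
        intro m' i'
        show min ((if m' = w then 0 else (addE Q u k h).1 m' i') + a m' i') (N m' i') = _
        rw [addE_apply]
        by_cases hc : m' = u ∧ i' = k
        · rw [if_pos hc, if_pos hc, if_neg (hc.1 ▸ hw.symm)]
        · rw [if_neg hc, if_neg hc]; rfl
      constructor
      · intro _
        rw [hentry]
        by_cases hc : m = u ∧ i = k
        · rw [if_pos hc]
          show min ((if m = w then 0 else Q.1 m i) + a m i) (N m i) ≤ _
          rw [if_neg (hc.1 ▸ hw.symm)]
          exact min_le_min (by omega) le_rfl
        · rw [if_neg hc]
      · intro hne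
        rw [hentry]
        by_cases hc : m = u ∧ i = k
        · exfalso
          apply hne
          refine ⟨j, hc.2 ▸ hkj, ?_⟩
          show 0 < min ((if m = w then 0 else Q.1 m j) + a m j) (N m j)
          rw [if_neg (hc.1 ▸ hw.symm)]
          have := Q.2 m j
          have := hc.1 ▸ hj
          omega
        · rw [if_neg hc]
  -- combine
  have hJu : JCost 𝒜 ρ wp wf p f V (addE Q u k h) u = JCost 𝒜 ρ wp wf p f V Q u + 1 := by
    unfold JCost
    rw [hg u]
    have : ∀ a ∈ 𝒜, ρ a * V (nextQ (addE Q u k h) u a) = ρ a * V (nextQ Q u a) := by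
      intro a _; rw [nextQ_addE_self]
    rw [Finset.sum_congr rfl this]
    ring
  have hJv : JCost 𝒜 ρ wp wf p f V Q v + 1 ≤ JCost 𝒜 ρ wp wf p f V (addE Q u k h) v := by
    unfold JCost
    rw [hg v]
    have : (∑ a ∈ 𝒜, ρ a * V (nextQ Q v a)) ≤ ∑ a ∈ 𝒜, ρ a * V (nextQ (addE Q u k h) v a) :=
      Finset.sum_le_sum fun a ha => mul_le_mul_of_nonneg_left (hVle v a) (hρ0 a ha)
    linarith
  calc JCost 𝒜 ρ wp wf p f V (addE Q u k h) u
      = JCost 𝒜 ρ wp wf p f V Q u + 1 := hJu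
    _ ≤ JCost 𝒜 ρ wp wf p f V Q v + 1 := by linarith [hmin v]
    _ ≤ JCost 𝒜 ρ wp wf p f V (addE Q u k h) v := hJv
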